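/- arXiv:2303.04083 — 3 statements merged into one kernel-verified Lean document; each statement's English description precedes it below -/
import Mathlib

section
/- Let G be an abelian group and ℓ a prime, r ≥ 2. Suppose G contains an infinite subset whose elements have pairwise distinct, linearly independent images in the 𝔽_ℓ-vector space G/ℓG, and suppose the subgroup G[ℓʳ] of ℓʳ-torsion elements is finite. Then G/ℓʳG contains infinitely many elements of order exactly ℓʳ. -/
/-- If an abelian group `G` contains a sequence of elements that are linearly
independent modulo `ℓ`, and the `ℓʳ`-torsion subgroup of `G` is finite, then
`G/ℓʳG` contains infinitely many elements of order exactly `ℓʳ`. -/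
theorem infinitely_many_order_ell_r (G : Type*) [AddCommGroup G] (ℓ r : ℕ)
    (hℓ : ℓ.Prime) (hr : 2 ≤ r) (a : ℕ → G) (ha : Function.Injective a)
    (hindep : ∀ (T : Finset ℕ) (c : ℕ → ℤ),
      (∃ w : G, (∑ i ∈ T, c i • a i) = (ℓ : ℤ) • w) → ∀ i ∈ T, (ℓ : ℤ) ∣ c i)
    (hfin : {g : G | ℓ ^ r • g = 0}.Finite) :
    {x : G ⧸ (LinearMap.range (((ℓ ^ r : ℕ) : ℤ) • (LinearMap.id : G →ₗ[ℤ] G))) |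
      addOrderOf x = ℓ ^ r}.Infinite := by
  classical
  set p : Submodule ℤ G :=
    LinearMap.range (((ℓ ^ r : ℕ) : ℤ) • (LinearMap.id : G →ₗ[ℤ] G)) with hp
  have hmem : ∀ g : G, g ∈ p ↔ ∃ w : G, ((ℓ : ℤ) ^ r) • w = g := by
    intro g
    constructor
    · rintro ⟨y, rfl⟩
      exact ⟨y, by simp only [LinearMap.smul_apply, LinearMap.id_apply, Nat.cast_pow]⟩
    · rintro ⟨w, rfl⟩
      exact ⟨w, by simp only [LinearMap.smul_apply, LinearMap.id_apply, Nat.cast_pow]⟩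
  -- key: if a i - a j is divisible by ℓ then i = j
  have key : ∀ i j : ℕ, (∃ w : G, a i - a j = (ℓ : ℤ) • w) → i = j := by
    intro i j hw
    by_contra hne
    have h1 := hindep {i, j} (fun k => if k = i then 1 else -1) ?_ i (by simp)
    · have h1' : (ℓ : ℤ) ∣ 1 := by simpa using h1
      have h2 : ℓ ∣ 1 := by exact_mod_cast h1'
      exact hℓ.one_lt.ne' (Nat.dvd_one.mp h2)
    · obtain ⟨w, hw⟩ := hw
      refine ⟨w, ?_⟩
      rw [Finset.sum_pair hne]
      have hji : j ≠ i := fun h => hne h.symm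
      simpa [hji, sub_eq_add_neg] using hw
  -- ℓ^r divisibility implies ℓ divisibility
  have hdiv : ∀ g w : G, ((ℓ : ℤ) ^ r) • w = g → ∃ w' : G, g = (ℓ : ℤ) • w' := by
    intro g w h
    refine ⟨((ℓ : ℤ) ^ (r - 1)) • w, ?_⟩
    rw [← h, smul_smul, ← pow_succ']
    congr 2
    omega
  -- injectivity of the images in the quotient
  have hinj : Function.Injective (fun i => p.mkQ (a i)) := by
    intro i j h
    apply key i j
    have hmem' : a i - a j ∈ p := by
      rw [← Submodule.Quotient.eq]
      exact h
    obtain ⟨w, hw⟩ := (hmem _).mp hmem'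
    exact hdiv _ w hw
  -- every image has order dividing ℓ^r
  have hdvd : ∀ i : ℕ, addOrderOf (p.mkQ (a i)) ∣ ℓ ^ r := by
    intro i
    rw [addOrderOf_dvd_iff_nsmul_eq_zero, ← map_nsmul]
    rw [Submodule.mkQ_apply, Submodule.Quotient.mk_eq_zero]
    exact (hmem _).mpr ⟨a i, by rw [← Nat.cast_pow, natCast_zsmul]⟩
  -- bad set
  set B : Set ℕ := {i | addOrderOf (p.mkQ (a i)) ≠ ℓ ^ r} with hB
  -- for any bad i, choose a witness
  have hbad : ∀ i ∈ B, ∃ b : G, ℓ ^ r • b = 0 ∧ ∃ w : G, a i - b = (ℓ : ℤ) • w := by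
    intro i hi
    -- order divides ℓ^(r-1)
    obtain ⟨k, hk, hke⟩ := (Nat.dvd_prime_pow hℓ).mp (hdvd i)
    have hkr : k ≤ r - 1 := by
      by_contra hc
      have hkr' : k = r := by omega
      exact hi (hkr' ▸ hke)
    have hdvd1 : addOrderOf (p.mkQ (a i)) ∣ ℓ ^ (r - 1) := by
      rw [hke]; exact pow_dvd_pow ℓ hkr
    have hz : (ℓ ^ (r - 1)) • (p.mkQ (a i)) = 0 :=
      addOrderOf_dvd_iff_nsmul_eq_zero.mp hdvd1
    rw [← map_nsmul, Submodule.mkQ_apply, Submodule.Quotient.mk_eq_zero] at hz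
    obtain ⟨w, hw⟩ := (hmem _).mp hz
    refine ⟨a i - (ℓ : ℤ) • w, ?_, ⟨w, by abel⟩⟩
    have hc1 : ((ℓ : ℤ) ^ (r - 1)) • a i = ℓ ^ (r - 1) • a i := by
      rw [← Nat.cast_pow, natCast_zsmul]
    have hc2 : ((ℓ : ℤ) ^ (r - 1)) * (ℓ : ℤ) = (ℓ : ℤ) ^ r := by
      rw [← pow_succ]; congr 1; omega
    have h1 : ((ℓ : ℤ) ^ (r - 1)) • (a i - (ℓ : ℤ) • w) = 0 := by
      rw [smul_sub, smul_smul, hc2, hw, hc1, sub_self]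
    have h2 : ((ℓ : ℤ) ^ r) • (a i - (ℓ : ℤ) • w) = 0 := by
      have hre : r = 1 + (r - 1) := by omega
      rw [hre, pow_add, pow_one, mul_smul, h1, smul_zero]
    rw [← Nat.cast_pow, natCast_zsmul] at h2
    exact h2
  -- B is finite
  choose! b hb1 hb2 using hbad
  have hBfin : B.Finite := by
    apply Set.Finite.of_finite_image (f := b)
    · exact hfin.subset (by rintro x ⟨i, hi, rfl⟩; exact hb1 i hi)
    · intro i hi j hj hij
      apply key i j
      obtain ⟨wi, hwi⟩ := hb2 i hi
      obtain ⟨wj, hwj⟩ := hb2 j hj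
      refine ⟨wi - wj, ?_⟩
      have heq : a i - a j = (a i - b i) - (a j - b j) := by rw [hij]; abel
      rw [heq, hwi, hwj, smul_sub]
  -- conclude
  have hBc : Bᶜ.Infinite := Set.Finite.infinite_compl hBfin
  have himg : ((fun i => p.mkQ (a i)) '' Bᶜ).Infinite :=
    hBc.image (hinj.injOn)
  apply himg.mono
  rintro x ⟨i, hi, rfl⟩
  simpa [hB] using not_not.mp hi
end

section
/- Let M be an abelian group and N ≥ 1. Define Φ : M^N → M^N by Φ(α)_t = α_{t−1} − 2α_t + α_{t+1}, with the conventions α₀ = α_{N+1} = 0. Then the map M[N+1] → ker(Φ) sending α to (α, 2α, 3α, …, Nα) is an isomorphism of abelian groups, where M[N+1] = {α ∈ M : (N+1)·α = 0}. -/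
/-- The kernel of the tridiagonal map `Φ(α)_t = α_{t−1} − 2α_t + α_{t+1}` on `M^N`
(with the convention `α₀ = α_{N+1} = 0`) is isomorphic to `M[N+1]` via
`α ↦ (α, 2α, …, Nα)`. -/
theorem ker_discrete_laplacian (M : Type*) [AddCommGroup M] (N : ℕ) (hN : 1 ≤ N)
    (e : (Fin N → M) → ℕ → M)
    (he : ∀ α j, e α j = if h : 1 ≤ j ∧ j ≤ N then α ⟨j - 1, by omega⟩ else 0)
    (Φ : (Fin N → M) → Fin N → M)
    (hΦ : ∀ α t, Φ α t = e α t.1 - 2 • e α (t.1 + 1) + e α (t.1 + 2)) :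
    ∀ β : Fin N → M,
      Φ β = 0 ↔ ∃! α : M, (N + 1) • α = 0 ∧ ∀ t : Fin N, β t = (t.1 + 1) • α := by
  intro β
  constructor
  · intro h0
    set b0 : M := β ⟨0, by omega⟩ with hb0
    have key : ∀ j, j ≤ N → e β j = j • b0 := by
      intro j
      induction j using Nat.strong_induction_on with
      | _ j ih =>
        match j, ih with
        | 0, ih =>
          intro _
          rw [he]
          simp
        | 1, ih =>
          intro h1
          rw [he]
          rw [dif_pos ⟨le_refl 1, h1⟩]
          simp [hb0]
        | (k+2), ih =>
          intro hk
          have ht := congrFun h0 ⟨k, by omega⟩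
          rw [hΦ] at ht
          simp only [Pi.zero_apply] at ht
          have e1 := ih k (by omega) (by omega)
          have e2 := ih (k+1) (by omega) (by omega)
          rw [e1, e2] at ht
          have h3 : e β (k+2) = -(k • b0 - 2 • ((k+1) • b0)) :=
            eq_neg_of_add_eq_zero_right ht
          rw [h3]
          simp only [add_nsmul, two_nsmul, one_nsmul]
          abel
    have hend : (N + 1) • b0 = 0 := by
      obtain ⟨m, rfl⟩ : ∃ m, N = m + 1 := ⟨N - 1, by omega⟩
      have ht := congrFun h0 ⟨m, by omega⟩
      rw [hΦ] at ht
      simp only [Pi.zero_apply] at ht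
      have e1 := key m (by omega)
      have e2 := key (m+1) (by omega)
      have e3 : e β (m+2) = 0 := by
        rw [he]
        rw [dif_neg (by omega)]
      rw [e1, e2, e3] at ht
      have : (m + 1 + 1) • b0 = -(m • b0 - 2 • ((m+1) • b0)) := by
        simp only [add_nsmul, two_nsmul, one_nsmul]
        abel
      rw [this]
      rw [add_zero] at ht
      rw [ht, neg_zero]
    refine ⟨b0, ⟨hend, ?_⟩, ?_⟩
    · intro t
      have h1 : e β (t.1 + 1) = β t := by
        rw [he, dif_pos ⟨by omega, by omega⟩]
        exact congrArg β (Fin.ext (show t.1 + 1 - 1 = t.1 by omega))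
      rw [← h1, key (t.1 + 1) (by omega)]
    · rintro α' ⟨h1', h2'⟩
      have := h2' ⟨0, by omega⟩
      simp only [zero_add, one_nsmul] at this
      exact this.symm
  · rintro ⟨α, ⟨h1, h2⟩, -⟩
    have key : ∀ j, j ≤ N + 1 → e β j = j • α := by
      intro j hj
      rw [he]
      by_cases hc : 1 ≤ j ∧ j ≤ N
      · rw [dif_pos hc]
        have := h2 ⟨j - 1, by omega⟩
        simp only at this
        rw [this]
        congr 1
        omega
      · rw [dif_neg hc]
        rcases (by omega : j = 0 ∨ j = N + 1) with rfl | rfl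
        · simp
        · rw [h1]
    funext t
    simp only [Pi.zero_apply]
    rw [hΦ, key t.1 (by omega), key (t.1 + 1) (by omega), key (t.1 + 2) (by omega)]
    simp only [add_nsmul, two_nsmul, one_nsmul]
    abel
end

section
/- Let ℓ be a prime, r ≥ 1, d ≥ 1 with gcd(d, ℓ) = 1, and set N = d·ℓʳ − 1. Let M be a module over ℤ_ℓ (the ℓ-adic integers) and define Φ : M^N → M^N by Φ(α)_t = α_{t−1} − 2α_t + α_{t+1} (α₀ = α_{N+1} = 0). Then the cokernel of Φ is annihilated by ℓʳ. -/
/-- For `N = d·ℓʳ − 1` with `gcd(d, ℓ) = 1` and `M` a `ℤ_ℓ`-module, the cokernel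
of the tridiagonal map `Φ` on `M^N` is annihilated by `ℓʳ`. -/
theorem coker_annihilated (ℓ : ℕ) [Fact ℓ.Prime] (r d : ℕ) (hr : 1 ≤ r)
    (hd : 1 ≤ d) (hcop : ¬ ℓ ∣ d) (N : ℕ) (hN : N = d * ℓ ^ r - 1)
    (M : Type*) [AddCommGroup M] [Module ℤ_[ℓ] M]
    (e : (Fin N → M) → ℕ → M)
    (he : ∀ α j, e α j = if h : 1 ≤ j ∧ j ≤ N then α ⟨j - 1, by omega⟩ else 0)
    (Φ : (Fin N → M) → Fin N → M)
    (hΦ : ∀ α t, Φ α t = e α t.1 - 2 • e α (t.1 + 1) + e α (t.1 + 2)) :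
    ∀ β : Fin N → M, ∃ α : Fin N → M, ∀ t : Fin N, Φ α t = ℓ ^ r • β t := by
  intro β
  have hℓ : 2 ≤ ℓ := (Fact.out : ℓ.Prime).two_le
  have hℓr : 1 ≤ ℓ ^ r := Nat.one_le_pow _ _ (by omega)
  have hN1 : N + 1 = d * ℓ ^ r := by
    have : 1 ≤ d * ℓ ^ r := Nat.one_le_iff_ne_zero.mpr (by positivity)
    omega
  -- `d` is a unit in `ℤ_[ℓ]`
  have hdu : IsUnit (d : ℤ_[ℓ]) := by
    rw [PadicInt.isUnit_iff]
    have h1 : ‖((d : ℤ) : ℤ_[ℓ])‖ ≤ 1 := PadicInt.norm_le_one _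
    have h2 : ¬ ‖((d : ℤ) : ℤ_[ℓ])‖ < 1 := by
      rw [PadicInt.norm_int_lt_one_iff_dvd]
      exact_mod_cast hcop
    have : ‖((d : ℤ) : ℤ_[ℓ])‖ = 1 := le_antisymm h1 (not_lt.mp h2)
    simpa using this
  obtain ⟨u, hu⟩ := hdu
  set v : ℤ_[ℓ] := ((u⁻¹ : ℤ_[ℓ]ˣ) : ℤ_[ℓ]) with hv
  have hvd : v * (d : ℤ_[ℓ]) = 1 := by rw [hv, ← hu]; exact u.inv_mul
  -- the Green's function
  set c : ℕ → ℕ → ℤ := fun j k => min (j : ℤ) (k : ℤ) * ((N : ℤ) + 1 - max (j : ℤ) (k : ℤ))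
    with hc
  set α : Fin N → M := fun i => (-v) • ∑ k : Fin N, ((c (i.1 + 1) (k.1 + 1) : ℤ_[ℓ])) • β k
    with hα
  refine ⟨α, ?_⟩
  intro t
  -- expressing `e α j` via the Green's function, including boundary values
  have hF : ∀ j, j ≤ N + 1 →
      e α j = (-v) • ∑ k : Fin N, ((c j (k.1 + 1) : ℤ_[ℓ])) • β k := by
    intro j hj
    rw [he]
    split_ifs with h
    · have hj1 : j - 1 + 1 = j := by omega
      rw [hα]
      simp only [hj1]
    · -- boundary: j = 0 or j = N + 1, and the Green's function vanishes
      have hsum : ∀ k : Fin N, ((c j (k.1 + 1) : ℤ_[ℓ])) • β k = 0 := by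
        intro k
        have hk : k.1 < N := k.isLt
        have hcz : c j (k.1 + 1) = 0 := by
          rcases (by omega : j = 0 ∨ j = N + 1) with h0 | h0
          · subst h0
            simp only [hc, Nat.cast_zero]
            rw [min_eq_left (by positivity), zero_mul]
          · subst h0
            have hmax : max ((N : ℤ) + 1) ((k.1 : ℤ) + 1) = (N : ℤ) + 1 :=
              max_eq_left (by exact_mod_cast Nat.succ_le_succ (le_of_lt hk))
            simp only [hc]
            push_cast
            rw [hmax]
            ring
        rw [hcz]
        simp
      rw [Finset.sum_congr rfl (fun k _ => hsum k)]
      simp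
  have ht : t.1 < N := t.isLt
  rw [hΦ, hF t.1 (by omega), hF (t.1 + 1) (by omega), hF (t.1 + 2) (by omega)]
  -- combine the three sums into one
  have hcomb :
      (-v) • ∑ k : Fin N, ((c t.1 (k.1 + 1) : ℤ_[ℓ])) • β k
        - 2 • ((-v) • ∑ k : Fin N, ((c (t.1 + 1) (k.1 + 1) : ℤ_[ℓ])) • β k)
        + (-v) • ∑ k : Fin N, ((c (t.1 + 2) (k.1 + 1) : ℤ_[ℓ])) • β k
      = (-v) • ∑ k : Fin N,
          (((c t.1 (k.1 + 1) - 2 * c (t.1 + 1) (k.1 + 1) + c (t.1 + 2) (k.1 + 1) : ℤ)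
            : ℤ_[ℓ])) • β k := by
    rw [Finset.sum_congr rfl (fun (k : Fin N) _ => by
      push_cast
      module : ∀ k ∈ Finset.univ,
        (((c t.1 (k.1 + 1) - 2 * c (t.1 + 1) (k.1 + 1) + c (t.1 + 2) (k.1 + 1) : ℤ)
          : ℤ_[ℓ])) • β k
        = ((c t.1 (k.1 + 1) : ℤ_[ℓ])) • β k - 2 • (((c (t.1+1) (k.1 + 1) : ℤ_[ℓ])) • β k)
          + ((c (t.1+2) (k.1 + 1) : ℤ_[ℓ])) • β k)]
    rw [Finset.sum_add_distrib, Finset.sum_sub_distrib, smul_add, smul_sub, ← Finset.smul_sum,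
      smul_comm]
  rw [hcomb]
  -- the second difference of the Green's function
  have hkey : ∀ m : ℕ, 1 ≤ m → m ≤ N →
      c t.1 m - 2 * c (t.1 + 1) m + c (t.1 + 2) m
        = if m = t.1 + 1 then -((N : ℤ) + 1) else 0 := by
    intro m h1 h2
    rcases lt_trichotomy m (t.1 + 1) with hlt | heq | hgt
    · have hmle : m ≤ t.1 := by omega
      rw [if_neg (by omega)]
      simp only [hc]
      push_cast
      rw [min_eq_right (by exact_mod_cast hmle : (m : ℤ) ≤ t.1),
        min_eq_right (by exact_mod_cast (by omega : m ≤ t.1 + 1) : (m : ℤ) ≤ (t.1 : ℤ) + 1),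
        min_eq_right (by exact_mod_cast (by omega : m ≤ t.1 + 2) : (m : ℤ) ≤ (t.1 : ℤ) + 2),
        max_eq_left (by exact_mod_cast hmle : (m : ℤ) ≤ t.1),
        max_eq_left (by exact_mod_cast (by omega : m ≤ t.1 + 1) : (m : ℤ) ≤ (t.1 : ℤ) + 1),
        max_eq_left (by exact_mod_cast (by omega : m ≤ t.1 + 2) : (m : ℤ) ≤ (t.1 : ℤ) + 2)]
      ring
    · rw [if_pos heq]
      subst heq
      simp only [hc]
      push_cast
      rw [min_eq_left (by linarith : (t.1 : ℤ) ≤ (t.1 : ℤ) + 1),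
        max_eq_right (by linarith : (t.1 : ℤ) ≤ (t.1 : ℤ) + 1),
        min_self, max_self,
        min_eq_right (by linarith : (t.1 : ℤ) + 1 ≤ (t.1 : ℤ) + 2),
        max_eq_left (by linarith : (t.1 : ℤ) + 1 ≤ (t.1 : ℤ) + 2)]
      ring
    · have hmge : t.1 + 2 ≤ m := by omega
      rw [if_neg (by omega)]
      simp only [hc]
      push_cast
      rw [min_eq_left (by exact_mod_cast (by omega : t.1 ≤ m) : (t.1 : ℤ) ≤ m),
        min_eq_left (by exact_mod_cast (by omega : t.1 + 1 ≤ m) : (t.1 : ℤ) + 1 ≤ m),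
        min_eq_left (by exact_mod_cast hmge : (t.1 : ℤ) + 2 ≤ m),
        max_eq_right (by exact_mod_cast (by omega : t.1 ≤ m) : (t.1 : ℤ) ≤ m),
        max_eq_right (by exact_mod_cast (by omega : t.1 + 1 ≤ m) : (t.1 : ℤ) + 1 ≤ m),
        max_eq_right (by exact_mod_cast hmge : (t.1 : ℤ) + 2 ≤ m)]
      ring
  -- evaluate the sum
  have hsum : ∑ k : Fin N,
      (((c t.1 (k.1 + 1) - 2 * c (t.1 + 1) (k.1 + 1) + c (t.1 + 2) (k.1 + 1) : ℤ)
        : ℤ_[ℓ])) • β k = (-(((N : ℤ_[ℓ])) + 1)) • β t := by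
    have : ∀ k : Fin N,
        (((c t.1 (k.1 + 1) - 2 * c (t.1 + 1) (k.1 + 1) + c (t.1 + 2) (k.1 + 1) : ℤ)
          : ℤ_[ℓ])) • β k = if k = t then (-(((N : ℤ_[ℓ])) + 1)) • β t else 0 := by
      intro k
      rw [hkey (k.1 + 1) (by omega) (by omega : k.1 + 1 ≤ N)]
      by_cases hk : k = t
      · subst hk
        rw [if_pos rfl, if_pos rfl]
        push_cast
        ring_nf
      · rw [if_neg (by omega : ¬ k.1 + 1 = t.1 + 1), if_neg hk]
        simp
    rw [Finset.sum_congr rfl (fun k _ => this k), Finset.sum_ite_eq' Finset.univ t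
      (fun _ => (-(((N : ℤ_[ℓ])) + 1)) • β t), if_pos (Finset.mem_univ t)]
  rw [hsum, smul_smul]
  have hNc : (N : ℤ_[ℓ]) + 1 = (d : ℤ_[ℓ]) * (ℓ : ℤ_[ℓ]) ^ r := by
    have h := congrArg (Nat.cast : ℕ → ℤ_[ℓ]) hN1
    push_cast at h
    exact h
  have : -v * -((N : ℤ_[ℓ]) + 1) = ((ℓ ^ r : ℕ) : ℤ_[ℓ]) := by
    rw [hNc]
    push_cast
    calc -v * -((d : ℤ_[ℓ]) * (ℓ : ℤ_[ℓ]) ^ r) = (v * d) * (ℓ : ℤ_[ℓ]) ^ r := by ring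
    _ = (ℓ : ℤ_[ℓ]) ^ r := by rw [hvd, one_mul]
  rw [this, Nat.cast_smul_eq_nsmul]
end
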